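/- If S ∈ π is a coalition of a partition π of an HGCRP instance such that for some agent i ∉ S we have U(S ∪ {i}) > U(π(i)) and U(S ∪ {i}) ≥ U(S), then the non-increasingly sorted utility sequence of the partition obtained by moving i into S is lexicographically greater than that of π. -/

import Mathlib

/-- A partition of the agents of type `α`, given as the map sending each agent to her
coalition: every agent belongs to her own coalition, and the coalitions are consistent. -/
def IsPartitionFn {α : Type*} [DecidableEq α] (C : α → Finset α) : Prop :=
  (∀ i, i ∈ C i) ∧ ∀ i j, i ∈ C j → C i = C j

/-- The social welfare of a partition: the sum of the agents' utilities. -/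
noncomputable def welfare {α : Type*} [Fintype α] (U : Finset α → ℝ) (C : α → Finset α) : ℝ :=
  ∑ i, U (C i)

/-- `C'` Pareto dominates `C`. -/
def ParetoDominates {α : Type*} (U : Finset α → ℝ) (C C' : α → Finset α) : Prop :=
  (∀ i, U (C i) ≤ U (C' i)) ∧ ∃ i, U (C i) < U (C' i)

/-- No partition Pareto dominates `C`. -/
def ParetoOptimal {α : Type*} [DecidableEq α] (U : Finset α → ℝ) (C : α → Finset α) : Prop :=
  ¬ ∃ C', IsPartitionFn C' ∧ ParetoDominates U C C'

/-- No nonempty coalition blocks `C`. -/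
def CoreStable {α : Type*} (U : Finset α → ℝ) (C : α → Finset α) : Prop :=
  ¬ ∃ S : Finset α, S.Nonempty ∧ ∀ i ∈ S, U (C i) < U S

/-- No agent can beneficially move to an existing (possibly empty) coalition without
making the members of that coalition worse off. -/
def IndividuallyStable {α : Type*} [DecidableEq α] (U : Finset α → ℝ) (C : α → Finset α) : Prop :=
  ¬ ∃ i T, i ∉ T ∧ (T = ∅ ∨ ((∃ j, C j = T) ∧ U T ≤ U (insert i T))) ∧
    U (C i) < U (insert i T)

/-- No agent can beneficially move to an existing (possibly empty) coalition. -/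
def NashStable {α : Type*} [DecidableEq α] (U : Finset α → ℝ) (C : α → Finset α) : Prop :=
  ¬ ∃ i T, i ∉ T ∧ (T = ∅ ∨ ∃ j, C j = T) ∧ U (C i) < U (insert i T)

/-- The sequence of the agents' utilities in partition `C`, sorted in non-increasing order. -/
noncomputable def psi {α : Type*} [Fintype α] (U : Finset α → ℝ) (C : α → Finset α) : List ℝ :=
  (Finset.univ.val.map fun i => U (C i)).sort (· ≥ ·)



open Multiset in
private lemma lex_of_countP (t : ℝ) (a : List ℝ) : ∀ b : List ℝ,
    a.Pairwise (· ≥ ·) → b.Pairwise (· ≥ ·) →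
    (∀ s : ℝ, t ≤ s → countP (s ≤ ·) (↑a : Multiset ℝ) ≤ countP (s ≤ ·) (↑b : Multiset ℝ)) →
    countP (t ≤ ·) (↑a : Multiset ℝ) < countP (t ≤ ·) (↑b : Multiset ℝ) →
    List.Lex (· < ·) a b := by
  induction a with
  | nil =>
    intro b _ _ _ hst
    cases b with
    | nil => simp at hst
    | cons y b => exact List.Lex.nil
  | cons x a ih =>
    intro b ha hb hle hst
    cases b with
    | nil => simp at hst
    | cons y b =>
      rcases lt_trichotomy x y with h | h | h
      · exact List.Lex.rel h
      · subst h
        refine List.Lex.cons (ih b ha.of_cons hb.of_cons ?_ ?_)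
        · intro s hs
          have := hle s hs
          rw [← Multiset.cons_coe, ← Multiset.cons_coe, countP_cons, countP_cons] at this
          omega
        · have := hst
          rw [← Multiset.cons_coe, ← Multiset.cons_coe, countP_cons, countP_cons] at this
          omega
      · exfalso
        by_cases hxt : t ≤ x
        · have h1 : countP (x ≤ ·) (↑(x :: a) : Multiset ℝ) ≤
              countP (x ≤ ·) (↑(y :: b) : Multiset ℝ) := hle x hxt
          have h2 : countP (x ≤ ·) (↑(y :: b) : Multiset ℝ) = 0 := by
            rw [countP_eq_zero]
            intro z hz
            rw [Multiset.mem_coe, List.mem_cons] at hz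
            rcases hz with rfl | hz
            · exact not_le.2 h
            · exact not_le.2 (lt_of_le_of_lt ((List.pairwise_cons.1 hb).1 z hz) h)
          have h3 : 0 < countP (x ≤ ·) (↑(x :: a) : Multiset ℝ) :=
            countP_pos.2 ⟨x, by simp, le_refl x⟩
          omega
        · push_neg at hxt
          have h2 : countP (t ≤ ·) (↑(x :: a) : Multiset ℝ) = 0 := by
            rw [countP_eq_zero]
            intro z hz
            rw [Multiset.mem_coe, List.mem_cons] at hz
            rcases hz with rfl | hz
            · exact not_le.2 hxt
            · exact not_le.2 (lt_of_le_of_lt ((List.pairwise_cons.1 ha).1 z hz) hxt)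
          have h3 : 0 < countP (t ≤ ·) (↑(y :: b) : Multiset ℝ) := by omega
          obtain ⟨z, hz, hz'⟩ := countP_pos.1 h3
          rw [Multiset.mem_coe, List.mem_cons] at hz
          rcases hz with rfl | hz
          · exact absurd hz' (not_le.2 (h.trans hxt))
          · exact absurd hz'
              (not_le.2 (lt_of_le_of_lt ((List.pairwise_cons.1 hb).1 z hz) (h.trans hxt)))

/-- If `S` is a coalition of partition `C`, `i ∉ S`, `U (S ∪ {i}) > U (π(i))` and
`U (S ∪ {i}) ≥ U S`, then moving `i` into `S` lexicographically increases the sorted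
utility sequence. -/
theorem stmt2 {α : Type*} [Fintype α] [DecidableEq α]
    (U : Finset α → ℝ) (hU : ∀ T : Finset α, 0 ≤ U T)
    (C : α → Finset α) (hC : IsPartitionFn C)
    (S : Finset α) (j₀ : α) (hS : C j₀ = S)
    (i : α) (hi : i ∉ S)
    (h1 : U (C i) < U (insert i S)) (h2 : U S ≤ U (insert i S)) :
    List.Lex (· < ·) (psi U C)
      (psi U (fun j => if j ∈ insert i S then insert i S else C j \ {i})) := by
  set C' : α → Finset α := fun j => if j ∈ insert i S then insert i S else C j \ {i} with hC'
  set t : ℝ := U (insert i S) with ht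
  -- pointwise implication
  have key : ∀ s : ℝ, t ≤ s → ∀ j, s ≤ U (C j) → s ≤ U (C' j) := by
    intro s hs j hj
    by_cases hjS : j ∈ insert i S
    · have hC'j : C' j = insert i S := if_pos hjS
      rcases Finset.mem_insert.1 hjS with rfl | hjS'
      · linarith
      · have hCj : C j = S := by
          rw [← hS]; exact hC.2 j j₀ (hS ▸ hjS')
        rw [hC'j]; rw [hCj] at hj; linarith
    · have hC'j : C' j = C j \ {i} := if_neg hjS
      by_cases hij : i ∈ C j
      · have : C i = C j := hC.2 i j hij
        rw [← this] at hj; linarith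
      · rw [hC'j, Finset.sdiff_singleton_eq_erase, Finset.erase_eq_of_notMem hij]; exact hj
  -- counts
  have count_le : ∀ s : ℝ, t ≤ s →
      Multiset.countP (s ≤ ·) (Finset.univ.val.map fun j => U (C j)) ≤
      Multiset.countP (s ≤ ·) (Finset.univ.val.map fun j => U (C' j)) := by
    intro s hs
    rw [Multiset.countP_map, Multiset.countP_map]
    exact Multiset.card_le_card
      (Multiset.monotone_filter_right _ (fun j hj => key s hs j hj))
  have count_lt :
      Multiset.countP (t ≤ ·) (Finset.univ.val.map fun j => U (C j)) <
      Multiset.countP (t ≤ ·) (Finset.univ.val.map fun j => U (C' j)) := by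
    rw [Multiset.countP_map, Multiset.countP_map]
    apply Multiset.card_lt_card
    refine lt_of_le_of_ne (Multiset.monotone_filter_right _
      (fun j hj => key t le_rfl j hj)) ?_
    intro hEq
    have hi' : i ∈ Multiset.filter (fun j => t ≤ U (C' j)) Finset.univ.val := by
      rw [Multiset.mem_filter]
      refine ⟨Finset.mem_univ_val i, ?_⟩
      have : C' i = insert i S := if_pos (Finset.mem_insert_self i S)
      rw [this]
    rw [← hEq, Multiset.mem_filter] at hi'
    exact absurd hi'.2 (not_le.2 h1)
  -- assemble
  have e1 : (↑(psi U C) : Multiset ℝ) = Finset.univ.val.map fun j => U (C j) :=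
    Multiset.sort_eq _ _
  have e2 : (↑(psi U C') : Multiset ℝ) = Finset.univ.val.map fun j => U (C' j) :=
    Multiset.sort_eq _ _
  refine lex_of_countP t (psi U C) (psi U C')
    (Multiset.pairwise_sort _ _) (Multiset.pairwise_sort _ _) ?_ ?_
  · intro s hs; rw [e1, e2]; exact count_le s hs
  · rw [e1, e2]; exact count_lt
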